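/- Let N ∈ ℕ, C_1, …, C_N ∈ ℝ, t₀ ∈ ℝ, and ε, δ ∈ ℝ \ {0}. Let u : ℝ → ℝ be twice differentiable with u(s) > 0 for all s, and let E, P, F_1, …, F_N : ℝ → ℝ satisfy u''(s) + [E(s) − P(s)]u(s) = Σ_{i=1}^N F_i(s)/u(s)^{C_i} for all s ∈ ℝ. Let ψ be differentiable with ψ'(s)² = −(1/(εδ)) P(s) for all s. Define a(t) = u(t−t₀)^{1/δ}, φ(t) = ψ(t−t₀), G(t) = −(1/δ)E(t−t₀), G_i(t) = (1/δ)F_i(t−t₀), and A_i = δ(1 + C_i). Then a is positive and twice differentiable, and H'(t) + δH(t)² + εφ'(t)² = G(t) + Σ_{i=1}^N G_i(t)/a(t)^{A_i} holds for all t ∈ ℝ, where H = a'/a. -/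

import Mathlib

/-- corollary (A = 0, δ ≠ 0), converse direction. -/
theorem stmt_9
    (N : ℕ) (C : Fin N → ℝ) (t₀ ε δ : ℝ) (hε : ε ≠ 0) (hδ : δ ≠ 0)
    (u E P : ℝ → ℝ) (F : Fin N → ℝ → ℝ)
    (hud : Differentiable ℝ u) (hud' : Differentiable ℝ (deriv u))
    (hupos : ∀ s, 0 < u s)
    (hNLS : ∀ s, deriv (deriv u) s + (E s - P s) * u s = ∑ i, F i s / u s ^ C i)
    (ψ : ℝ → ℝ) (hψd : Differentiable ℝ ψ)
    (hψ : ∀ s, (deriv ψ s) ^ 2 = -(1 / (ε * δ)) * P s)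
    (a φ G : ℝ → ℝ) (Gi : Fin N → ℝ → ℝ) (Ai : Fin N → ℝ)
    (ha : ∀ t, a t = u (t - t₀) ^ (1 / δ))
    (hφ : ∀ t, φ t = ψ (t - t₀))
    (hG : ∀ t, G t = -(1 / δ) * E (t - t₀))
    (hGi : ∀ i t, Gi i t = (1 / δ) * F i (t - t₀))
    (hAi : ∀ i, Ai i = δ * (1 + C i)) :
    (∀ t, 0 < a t) ∧ Differentiable ℝ a ∧ Differentiable ℝ (deriv a) ∧
      ∀ t, deriv (fun t => deriv a t / a t) t + δ * (deriv a t / a t) ^ 2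
        + ε * (deriv φ t) ^ 2 = G t + ∑ i, Gi i t / a t ^ Ai i := by
  have hane : ∀ t, a t = (fun t => u (t - t₀) ^ (1 / δ)) t := ha
  have haeq : a = fun t => u (t - t₀) ^ (1 / δ) := funext ha
  have hapos : ∀ t, 0 < a t := by
    intro t; rw [ha t]; exact Real.rpow_pos_of_pos (hupos _) _
  have hsh : ∀ t : ℝ, HasDerivAt (fun t => u (t - t₀)) (deriv u (t - t₀)) t := by
    intro t
    have h1 : HasDerivAt (fun t : ℝ => t - t₀) 1 t := (hasDerivAt_id t).sub_const t₀
    simpa [Function.comp_def] using (hud (t - t₀)).hasDerivAt.comp t h1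
  have hsh' : ∀ t : ℝ, HasDerivAt (fun t => deriv u (t - t₀)) (deriv (deriv u) (t - t₀)) t := by
    intro t
    have h1 : HasDerivAt (fun t : ℝ => t - t₀) 1 t := (hasDerivAt_id t).sub_const t₀
    simpa [Function.comp_def] using (hud' (t - t₀)).hasDerivAt.comp t h1
  have hva : ∀ t : ℝ, HasDerivAt a
      (deriv u (t - t₀) * (1 / δ) * u (t - t₀) ^ (1 / δ - 1)) t := by
    intro t
    rw [haeq]
    exact (hsh t).rpow_const (Or.inl (ne_of_gt (hupos _)))
  have hderiva : ∀ t, deriv a t = deriv u (t - t₀) * (1 / δ) * u (t - t₀) ^ (1 / δ - 1) :=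
    fun t => (hva t).deriv
  have hH : ∀ t, deriv a t / a t = (1 / δ) * (deriv u (t - t₀) / u (t - t₀)) := by
    intro t
    rw [hderiva t, ha t]
    have h0 : u (t - t₀) ≠ 0 := ne_of_gt (hupos _)
    rw [Real.rpow_sub (hupos _), Real.rpow_one]
    have h1 : u (t - t₀) ^ (1 / δ) ≠ 0 := ne_of_gt (Real.rpow_pos_of_pos (hupos _) _)
    field_simp
  refine ⟨hapos, fun t => (hva t).differentiableAt, ?_, ?_⟩
  · have hderiva' : deriv a = fun t => deriv u (t - t₀) * (1 / δ) * u (t - t₀) ^ (1 / δ - 1) :=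
      funext hderiva
    rw [hderiva']
    intro t
    exact (((hsh' t).differentiableAt.mul (differentiableAt_const _)).mul
      ((hsh t).rpow_const (Or.inl (ne_of_gt (hupos _)))).differentiableAt)
  · intro t
    have h0 : u (t - t₀) ≠ 0 := ne_of_gt (hupos (t - t₀))
    -- deriv of H
    have hHfun : (fun t => deriv a t / a t) = fun t => (1 / δ) * (deriv u (t - t₀) / u (t - t₀)) :=
      funext hH
    have hq : HasDerivAt (fun t => (1 / δ) * (deriv u (t - t₀) / u (t - t₀)))
        ((1 / δ) * ((deriv (deriv u) (t - t₀) * u (t - t₀) - deriv u (t - t₀) * deriv u (t - t₀)) / u (t - t₀) ^ 2)) t := by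
      exact ((hsh' t).div (hsh t) h0).const_mul (1 / δ)
    have hdH : deriv (fun t => deriv a t / a t) t
        = (1 / δ) * ((deriv (deriv u) (t - t₀) * u (t - t₀) - deriv u (t - t₀) * deriv u (t - t₀)) / u (t - t₀) ^ 2) := by
      rw [hHfun]; exact hq.deriv
    -- deriv of φ
    have hφfun : φ = fun t => ψ (t - t₀) := funext hφ
    have hφd : HasDerivAt φ (deriv ψ (t - t₀)) t := by
      rw [hφfun]
      have h1 : HasDerivAt (fun t : ℝ => t - t₀) 1 t := (hasDerivAt_id t).sub_const t₀
      simpa [Function.comp_def] using (hψd (t - t₀)).hasDerivAt.comp t h1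
    -- RHS sum
    have hsum : ∑ i, Gi i t / a t ^ Ai i = (1 / (δ * u (t - t₀))) * ∑ i, F i (t - t₀) / u (t - t₀) ^ C i := by
      rw [Finset.mul_sum]
      refine Finset.sum_congr rfl fun i _ => ?_
      rw [hGi i t, ha t, hAi i, ← Real.rpow_mul (le_of_lt (hupos _))]
      have : 1 / δ * (δ * (1 + C i)) = 1 + C i := by field_simp
      rw [this, Real.rpow_add (hupos _), Real.rpow_one]
      have h2 : u (t - t₀) ^ C i ≠ 0 := ne_of_gt (Real.rpow_pos_of_pos (hupos _) _)
      field_simp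
    rw [hdH, hH t, hφd.deriv, hψ (t - t₀), hG t, hsum, ← hNLS (t - t₀)]
    field_simp
    ring
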